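/- Let u : J → ℝ be a twice differentiable, nowhere-vanishing solution of u'' − u'²/(2u) + 2uu' + u³/2 + 1/(2u) = 0 on an interval J. Then: (a) on every subinterval where |(u² + u' + 1)/(√2·u)| < 1, the function I₁(x) = −(1/2)·( x − √2·artanh( (u(x)² + u'(x) + 1)/(√2·u(x)) ) ) has zero derivative; (b) on all of J, the function I₂(x) = (1/2)·( x + √2·arctan( (u(x)² + u'(x) − 1)/(√2·u(x)) ) ) has zero derivative. Hence I₁ and I₂ are first integrals of the equation. -/

import Mathlib

open Real

/- The equation u'' − u'²/(2u) + 2uu' + u³/2 + 1/(2u) = 0 is the Painlevé–Gambier XXVII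
equation with F = 0.  `artanh` is the real inverse hyperbolic tangent,
`artanh y = (1/2)·log((1 + y)/(1 − y))` for |y| < 1; `arctan` is the real inverse
tangent.  A first integral is a function of (x,u,u') constant along every solution. -/

/-- The real inverse hyperbolic tangent. -/
noncomputable def artanh (y : ℝ) : ℝ := (1 / 2) * Real.log ((1 + y) / (1 - y))


private lemma hasDerivAt_artanh_comp {f : ℝ → ℝ} {f' x : ℝ} (hf : HasDerivAt f f' x)
    (h : |f x| < 1) :
    HasDerivAt (fun t => _root_.artanh (f t)) (f' / (1 - f x ^ 2)) x := by
  obtain ⟨h1, h2⟩ := abs_lt.mp h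
  have hp1 : 0 < 1 + f x := by linarith
  have hp2 : 0 < 1 - f x := by linarith
  have hq : HasDerivAt (fun t => (1 + f t) / (1 - f t))
      (((0 + f') * (1 - f x) - (1 + f x) * (0 - f')) / (1 - f x) ^ 2) x :=
    ((hasDerivAt_const x (1:ℝ)).add hf).div ((hasDerivAt_const x (1:ℝ)).sub hf)
      (by positivity)
  have hq0 : (1 + f x) / (1 - f x) ≠ 0 := by positivity
  have hl := (hq.log hq0).const_mul (1/2 : ℝ)
  have heq : (fun t => _root_.artanh (f t)) = fun t => (1/2 : ℝ) * Real.log ((1 + f t) / (1 - f t)) := by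
    funext t; simp [_root_.artanh]
  rw [heq]
  refine hl.congr_deriv ?_
  symm
  have hne : (1 : ℝ) - f x ^ 2 ≠ 0 := by nlinarith
  field_simp
  ring

/-- along any nowhere-vanishing solution `u` of
`u'' − u'²/(2u) + 2uu' + u³/2 + 1/(2u) = 0`:
(a) wherever `|(u² + u' + 1)/(√2·u)| < 1`, the function
`I₁ = −(1/2)(x − √2·artanh((u² + u' + 1)/(√2·u)))` has zero derivative;
(b) everywhere on `J`, the function
`I₂ = (1/2)(x + √2·arctan((u² + u' − 1)/(√2·u)))` has zero derivative.
Hence `I₁` and `I₂` are first integrals of the equation. -/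
theorem statement17 (J : Set ℝ) (u u' u'' : ℝ → ℝ)
    (hu : ∀ x ∈ J, HasDerivAt u (u' x) x)
    (hu' : ∀ x ∈ J, HasDerivAt u' (u'' x) x)
    (hu0 : ∀ x ∈ J, u x ≠ 0)
    (hode : ∀ x ∈ J,
      u'' x - (u' x) ^ 2 / (2 * u x) + 2 * u x * u' x + (u x) ^ 3 / 2
        + 1 / (2 * u x) = 0) :
    (∀ x ∈ J, |((u x) ^ 2 + u' x + 1) / (Real.sqrt 2 * u x)| < 1 →
      HasDerivAt (fun t =>
        -(1 / 2) * (t - Real.sqrt 2 *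
          _root_.artanh (((u t) ^ 2 + u' t + 1) / (Real.sqrt 2 * u t)))) 0 x) ∧
    (∀ x ∈ J,
      HasDerivAt (fun t =>
        (1 / 2) * (t + Real.sqrt 2 *
          Real.arctan (((u t) ^ 2 + u' t - 1) / (Real.sqrt 2 * u t)))) 0 x) := by
  have hs : Real.sqrt 2 ^ 2 = 2 := Real.sq_sqrt (by norm_num)
  have hs0 : Real.sqrt 2 ≠ 0 := by positivity
  have hEall : ∀ x ∈ J,
      2 * u x * u'' x - u' x ^ 2 + 4 * u x ^ 2 * u' x + u x ^ 4 + 1 = 0 := by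
    intro x hx
    have ha := hu0 x hx
    have h := hode x hx
    field_simp at h
    have h4 : (4 * u x) *
        (2 * u x * u'' x - u' x ^ 2 + 4 * u x ^ 2 * u' x + u x ^ 4 + 1) = 0 := by
      linear_combination (4 * u x) * h
    rcases mul_eq_zero.mp h4 with h' | h'
    · exact absurd h' (by simpa using ha)
    · exact h'
  constructor
  · intro x hx habs
    have ha := hu0 x hx
    have hE := hEall x hx
    have hA : HasDerivAt (fun t => (u t) ^ 2 + u' t + 1)
        (2 * u x ^ 1 * u' x + u'' x + 0) x :=
      (((hu x hx).pow 2).add (hu' x hx)).add (hasDerivAt_const x 1)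
    have hB : HasDerivAt (fun t => Real.sqrt 2 * u t) (Real.sqrt 2 * u' x) x :=
      (hu x hx).const_mul _
    have hf : HasDerivAt (fun t => ((u t) ^ 2 + u' t + 1) / (Real.sqrt 2 * u t))
        (((2 * u x ^ 1 * u' x + u'' x + 0) * (Real.sqrt 2 * u x)
          - ((u x) ^ 2 + u' x + 1) * (Real.sqrt 2 * u' x)) / (Real.sqrt 2 * u x) ^ 2) x :=
      hA.div hB (mul_ne_zero hs0 ha)
    have hat := hasDerivAt_artanh_comp hf habs
    have htot := ((hasDerivAt_id x).sub (hat.const_mul (Real.sqrt 2))).const_mul (-(1/2) : ℝ)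
    refine htot.congr_deriv ?_
    symm
    have habs2 : ((u x) ^ 2 + u' x + 1)^2 < (Real.sqrt 2 * u x)^2 := by
      have h2 : (0:ℝ) < |Real.sqrt 2 * u x| := abs_pos.mpr (mul_ne_zero hs0 ha)
      rw [abs_div] at habs
      have h3 := (div_lt_one h2).mp habs
      have h4 := abs_nonneg ((u x) ^ 2 + u' x + 1)
      nlinarith [sq_abs ((u x) ^ 2 + u' x + 1), sq_abs (Real.sqrt 2 * u x)]
    have hne' : (Real.sqrt 2 * u x)^2 - ((u x) ^ 2 + u' x + 1)^2 ≠ 0 := by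
      intro h; nlinarith
    rw [mul_pow, hs] at hne'
    simp only [div_pow, mul_pow, hs]
    field_simp
    linear_combination (-1) * hE
      + (-(u x^2 * u' x + u x * u'' x - u' x^2 - u' x)) * hs
  · intro x hx
    have ha := hu0 x hx
    have hE := hEall x hx
    have hA : HasDerivAt (fun t => (u t) ^ 2 + u' t - 1)
        (2 * u x ^ 1 * u' x + u'' x - 0) x :=
      (((hu x hx).pow 2).add (hu' x hx)).sub (hasDerivAt_const x 1)
    have hB : HasDerivAt (fun t => Real.sqrt 2 * u t) (Real.sqrt 2 * u' x) x :=
      (hu x hx).const_mul _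
    have hf : HasDerivAt (fun t => ((u t) ^ 2 + u' t - 1) / (Real.sqrt 2 * u t))
        (((2 * u x ^ 1 * u' x + u'' x - 0) * (Real.sqrt 2 * u x)
          - ((u x) ^ 2 + u' x - 1) * (Real.sqrt 2 * u' x)) / (Real.sqrt 2 * u x) ^ 2) x :=
      hA.div hB (mul_ne_zero hs0 ha)
    have hat := hf.arctan
    have htot := ((hasDerivAt_id x).add (hat.const_mul (Real.sqrt 2))).const_mul ((1/2) : ℝ)
    refine htot.congr_deriv ?_
    symm
    have hne' : ((Real.sqrt 2 * u x) ^ 2 + ((u x) ^ 2 + u' x - 1) ^ 2) ≠ 0 := by positivity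
    rw [mul_pow, hs] at hne'
    simp only [div_pow, mul_pow, hs]
    field_simp
    linear_combination (-1) * hE
      + (-(u x^2 * u' x + u x * u'' x - u' x^2 + u' x)) * hs
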